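/- arXiv:2003.02896 — 2 statements merged into one kernel-verified Lean document; each statement's English description precedes it below -/
import Mathlib

section
/- Let Q(x₁,…,xₙ) = (∑_{j=1}^n x_j^{-1})^{-1} on (0,∞)^n. If x, y ∈ (0,∞)^n with x ≠ y and Q(λx + (1-λ)y) = λQ(x) + (1-λ)Q(y) for some λ ∈ (0,1), then x = μ y for some real μ. -/
theorem harmonic_mean_equality_case (n : ℕ) (hn : 1 ≤ n)
    (x y : Fin n → ℝ) (hx : ∀ j, 0 < x j) (hy : ∀ j, 0 < y j) (hxy : x ≠ y)
    (l : ℝ) (hl : l ∈ Set.Ioo (0 : ℝ) 1)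
    (heq : (∑ j, ((l • x + (1 - l) • y) j)⁻¹)⁻¹
      = l * (∑ j, (x j)⁻¹)⁻¹ + (1 - l) * (∑ j, (y j)⁻¹)⁻¹) :
    ∃ μ : ℝ, x = μ • y := by
  have hne : Nonempty (Fin n) := ⟨⟨0, hn⟩⟩
  obtain ⟨hl0, hl1⟩ := hl
  have hl1' : (0:ℝ) < 1 - l := by linarith
  set z : Fin n → ℝ := fun j => l * x j + (1 - l) * y j with hzdef
  have hz : ∀ j, 0 < z j := fun j => by
    have := hx j; have := hy j; positivity
  set Sx := ∑ j, (x j)⁻¹ with hSxdef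
  set Sy := ∑ j, (y j)⁻¹ with hSydef
  set Sz := ∑ j, (z j)⁻¹ with hSzdef
  have hSx : 0 < Sx := Finset.sum_pos (fun j _ => inv_pos.2 (hx j)) Finset.univ_nonempty
  have hSy : 0 < Sy := Finset.sum_pos (fun j _ => inv_pos.2 (hy j)) Finset.univ_nonempty
  have hSz : 0 < Sz := Finset.sum_pos (fun j _ => inv_pos.2 (hz j)) Finset.univ_nonempty
  set w : Fin n → ℝ := fun j => (z j)⁻¹ / Sz with hwdef
  have hwsum : ∑ j, w j = 1 := by
    simp only [hwdef, div_eq_mul_inv, ← Finset.sum_mul]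
    rw [← hSzdef, mul_inv_cancel₀ hSz.ne']
  -- key identity
  have hkey : ∀ (v : Fin n → ℝ), (∀ j, 0 < v j) →
      (∑ j, (w j) ^ 2 * v j) - (∑ j, (v j)⁻¹)⁻¹
        = ∑ j, v j * (w j - (v j)⁻¹ / (∑ j, (v j)⁻¹)) ^ 2 := by
    intro v hv
    set Sv := ∑ j, (v j)⁻¹ with hSvdef
    have hSv : 0 < Sv := Finset.sum_pos (fun j _ => inv_pos.2 (hv j)) Finset.univ_nonempty
    have expand : ∀ j ∈ Finset.univ, v j * (w j - (v j)⁻¹ / Sv) ^ 2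
        = (w j) ^ 2 * v j - (2 / Sv) * w j + (1 / Sv ^ 2) * (v j)⁻¹ := by
      intro j _
      have hvj := (hv j).ne'
      field_simp
      ring
    rw [Finset.sum_congr rfl expand]
    rw [Finset.sum_add_distrib, Finset.sum_sub_distrib, ← Finset.mul_sum, ← Finset.mul_sum,
      hwsum, ← hSvdef]
    field_simp
    ring
  have hsumz : ∑ j, (w j) ^ 2 * z j = Sz⁻¹ := by
    have : ∀ j ∈ Finset.univ, (w j) ^ 2 * z j = (1 / Sz ^ 2) * (z j)⁻¹ := by
      intro j _
      have hzj := (hz j).ne'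
      simp only [hwdef]
      field_simp
    rw [Finset.sum_congr rfl this, ← Finset.mul_sum, ← hSzdef]
    field_simp
  set A := ∑ j, (w j) ^ 2 * x j with hAdef
  set B := ∑ j, (w j) ^ 2 * y j with hBdef
  have hsplit : l * A + (1 - l) * B = Sz⁻¹ := by
    rw [← hsumz, hAdef, hBdef, Finset.mul_sum, Finset.mul_sum, ← Finset.sum_add_distrib]
    apply Finset.sum_congr rfl
    intro j _
    simp only [hzdef]
    ring
  have heq' : Sz⁻¹ = l * Sx⁻¹ + (1 - l) * Sy⁻¹ := by
    have : (∑ j, ((l • x + (1 - l) • y) j)⁻¹) = Sz := by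
      apply Finset.sum_congr rfl
      intro j _
      simp [hzdef]
    rw [this] at heq
    exact heq
  have hkx := hkey x hx
  rw [← hSxdef, ← hAdef] at hkx
  have hky := hkey y hy
  rw [← hSydef, ← hBdef] at hky
  have hAge : 0 ≤ A - Sx⁻¹ := by
    rw [hkx]
    exact Finset.sum_nonneg fun j _ => mul_nonneg (hx j).le (sq_nonneg _)
  have hBge : 0 ≤ B - Sy⁻¹ := by
    rw [hky]
    exact Finset.sum_nonneg fun j _ => mul_nonneg (hy j).le (sq_nonneg _)
  have hAeq : A = Sx⁻¹ := by nlinarith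
  have hBeq : B = Sy⁻¹ := by nlinarith
  -- each square vanishes
  have hwx : ∀ j, w j = (x j)⁻¹ / Sx := by
    have h0 : ∑ j, x j * (w j - (x j)⁻¹ / Sx) ^ 2 = 0 := by
      rw [← hkx, hAeq, sub_self]
    have := (Finset.sum_eq_zero_iff_of_nonneg
      (fun j _ => mul_nonneg (hx j).le (sq_nonneg _))).1 h0
    intro j
    have hj := this j (Finset.mem_univ j)
    have h2 : (w j - (x j)⁻¹ / Sx) ^ 2 = 0 := by
      rcases mul_eq_zero.1 hj with h | h
      · exact absurd h (hx j).ne'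
      · exact h
    exact sub_eq_zero.mp (pow_eq_zero_iff (n := 2) (by norm_num) |>.1 h2)
  have hwy : ∀ j, w j = (y j)⁻¹ / Sy := by
    have h0 : ∑ j, y j * (w j - (y j)⁻¹ / Sy) ^ 2 = 0 := by
      rw [← hky, hBeq, sub_self]
    have := (Finset.sum_eq_zero_iff_of_nonneg
      (fun j _ => mul_nonneg (hy j).le (sq_nonneg _))).1 h0
    intro j
    have hj := this j (Finset.mem_univ j)
    have h2 : (w j - (y j)⁻¹ / Sy) ^ 2 = 0 := by
      rcases mul_eq_zero.1 hj with h | h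
      · exact absurd h (hy j).ne'
      · exact h
    exact sub_eq_zero.mp (pow_eq_zero_iff (n := 2) (by norm_num) |>.1 h2)
  refine ⟨Sy / Sx, funext fun j => ?_⟩
  have h := (hwx j).symm.trans (hwy j)
  simp only [Pi.smul_apply, smul_eq_mul]
  rw [div_eq_div_iff hSx.ne' hSy.ne'] at h
  have h2 : x j * ((x j)⁻¹ * Sy) = x j * ((y j)⁻¹ * Sx) := by rw [h]
  rw [← mul_assoc, mul_inv_cancel₀ (hx j).ne', one_mul] at h2
  have hyy : (y j)⁻¹ * y j = 1 := inv_mul_cancel₀ (hy j).ne'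
  rw [div_mul_eq_mul_div, eq_div_iff hSx.ne']
  linear_combination (-(y j)) * h2 - (x j * Sx) * hyy
end

section
/- For every y ∈ (0,1), ∫_0^{1/e} y/((t²+y²)·log(1/t)) dt ≤ π/(2(1 + (1/2)log(1/y))) + ∫_{1/(e√y)}^∞ du/(u²+1), and consequently this integral tends to 0 as y → 0⁺. -/
open MeasureTheory Filter Real Topology

private lemma arctan_int (y : ℝ) (hy : 0 < y) (a b : ℝ) :
    ∫ t in a..b, y / (t ^ 2 + y ^ 2) = arctan (b / y) - arctan (a / y) := by
  have hD : ∀ t : ℝ, (0 : ℝ) < t ^ 2 + y ^ 2 := fun t => by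
    have := sq_nonneg t; have := pow_pos hy 2; linarith
  have hderiv : ∀ t : ℝ, HasDerivAt (fun t => arctan (t / y)) (y / (t ^ 2 + y ^ 2)) t := by
    intro t
    have h1 : HasDerivAt (fun t : ℝ => t / y) (1 / y) t := by
      simpa using (hasDerivAt_id t).div_const y
    have h2 := (Real.hasDerivAt_arctan (t / y)).comp t h1
    refine h2.congr_deriv ?_
    have hy' : y ≠ 0 := ne_of_gt hy
    field_simp
    ring
  have hcont : Continuous fun t : ℝ => y / (t ^ 2 + y ^ 2) :=
    continuous_const.div ((continuous_pow 2).add continuous_const) fun t => ne_of_gt (hD t)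
  exact intervalIntegral.integral_eq_sub_of_hasDerivAt (fun t _ => hderiv t)
    (hcont.intervalIntegrable a b)

private lemma key_bound (y : ℝ) (hy : y ∈ Set.Ioo (0 : ℝ) 1) :
    (∫ t in Set.Ioc (0 : ℝ) (Real.exp 1)⁻¹,
        y / ((t ^ 2 + y ^ 2) * Real.log (1 / t)))
      ≤ Real.pi / (2 * (1 + (1 / 2) * Real.log (1 / y)))
        + ∫ u in Set.Ioi ((Real.exp 1)⁻¹ / Real.sqrt y), 1 / (u ^ 2 + 1) := by
  obtain ⟨hy0, hy1⟩ := hy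
  set c : ℝ := (Real.exp 1)⁻¹ with hcdef
  have hc0 : 0 < c := by positivity
  have hsy : 0 < Real.sqrt y := Real.sqrt_pos.2 hy0
  set a : ℝ := Real.sqrt y * c with hadef
  have ha0 : 0 < a := mul_pos hsy hc0
  have hac : a ≤ c := by
    have h1 : Real.sqrt y ≤ 1 := by
      rw [show (1:ℝ) = Real.sqrt 1 from (Real.sqrt_one).symm]
      exact Real.sqrt_le_sqrt hy1.le
    calc a = Real.sqrt y * c := rfl
      _ ≤ 1 * c := by nlinarith
      _ = c := one_mul c
  set K : ℝ := 1 + (1 / 2) * Real.log (1 / y) with hKdef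
  have hlogy : 0 < Real.log (1 / y) := by
    apply Real.log_pos
    rw [one_div]
    exact (one_lt_inv_iff₀).2 ⟨hy0, hy1⟩
  have hK0 : 0 < K := by simp only [hKdef]; linarith
  have hD : ∀ t : ℝ, (0 : ℝ) < t ^ 2 + y ^ 2 := fun t => by
    have := sq_nonneg t; have := pow_pos hy0 2; linarith
  -- log (1/t) ≥ 1 on Ioc 0 c
  have hlog1 : ∀ t ∈ Set.Ioc (0 : ℝ) c, (1 : ℝ) ≤ Real.log (1 / t) := by
    intro t ht
    have h1 : Real.exp 1 ≤ 1 / t := by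
      rw [le_div_iff₀ ht.1]
      calc Real.exp 1 * t ≤ Real.exp 1 * c := by nlinarith [ht.2, Real.exp_pos 1]
        _ = 1 := mul_inv_cancel₀ (ne_of_gt (Real.exp_pos 1))
    calc (1 : ℝ) = Real.log (Real.exp 1) := (Real.log_exp 1).symm
      _ ≤ Real.log (1 / t) := Real.log_le_log (Real.exp_pos 1) h1
  -- log (1/t) ≥ K on Ioc 0 a
  have hlogK : ∀ t ∈ Set.Ioc (0 : ℝ) a, K ≤ Real.log (1 / t) := by
    intro t ht
    have h1 : (1 : ℝ) / a ≤ 1 / t := one_div_le_one_div_of_le ht.1 ht.2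
    have h2 : Real.log (1 / a) ≤ Real.log (1 / t) := by
      apply Real.log_le_log (by positivity) h1
    have h3 : Real.log (1 / a) = K := by
      have hla : Real.log a = Real.log (Real.sqrt y) + Real.log c :=
        Real.log_mul (ne_of_gt hsy) (ne_of_gt hc0)
      rw [one_div, Real.log_inv, hla, Real.log_sqrt hy0.le, hcdef, Real.log_inv,
        Real.log_exp, hKdef, one_div y, Real.log_inv]
      ring
    linarith
  -- nonnegativity & integrability of f on Ioc 0 c
  set f : ℝ → ℝ := fun t => y / ((t ^ 2 + y ^ 2) * Real.log (1 / t)) with hfdef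
  have hfmeas : Measurable f := by
    apply Measurable.div measurable_const
    exact ((measurable_id.pow_const 2).add_const _).mul
      (Real.measurable_log.comp (measurable_const.div measurable_id))
  have hfbound : ∀ t ∈ Set.Ioc (0 : ℝ) c, ‖f t‖ ≤ y⁻¹ := by
    intro t ht
    have hL := hlog1 t ht
    have hDt := hD t
    have hpos : 0 < (t ^ 2 + y ^ 2) * Real.log (1 / t) := by nlinarith
    have hf0 : 0 ≤ f t := div_nonneg hy0.le hpos.le
    rw [Real.norm_eq_abs, abs_of_nonneg hf0]
    rw [hfdef]
    have h1 : y ^ 2 * 1 ≤ (t ^ 2 + y ^ 2) * Real.log (1 / t) := by nlinarith [sq_nonneg t]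
    calc y / ((t ^ 2 + y ^ 2) * Real.log (1 / t)) ≤ y / (y ^ 2 * 1) :=
          div_le_div_of_nonneg_left hy0.le (by positivity) h1
      _ = y⁻¹ := by field_simp
  have hfint : IntegrableOn f (Set.Ioc 0 c) := by
    apply Integrable.mono' (g := fun _ => y⁻¹)
      (integrableOn_const measure_Ioc_lt_top.ne)
      hfmeas.aestronglyMeasurable.restrict
    filter_upwards [ae_restrict_mem measurableSet_Ioc] with t ht
    exact hfbound t ht
  -- split the integral
  have hsplit : (∫ t in Set.Ioc (0 : ℝ) c, f t)
      = (∫ t in Set.Ioc (0 : ℝ) a, f t) + ∫ t in Set.Ioc a c, f t := by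
    rw [← setIntegral_union (Set.Ioc_disjoint_Ioc_of_le le_rfl) measurableSet_Ioc
      (hfint.mono_set (Set.Ioc_subset_Ioc_right hac))
      (hfint.mono_set (Set.Ioc_subset_Ioc_left ha0.le)),
      Set.Ioc_union_Ioc_eq_Ioc ha0.le hac]
  -- majorant integrability
  have hcont1 : Continuous fun t : ℝ => y / ((t ^ 2 + y ^ 2) * K) :=
    continuous_const.div (((continuous_pow 2).add continuous_const).mul continuous_const)
      fun t => ne_of_gt (mul_pos (hD t) hK0)
  have hcont2 : Continuous fun t : ℝ => y / (t ^ 2 + y ^ 2) :=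
    continuous_const.div ((continuous_pow 2).add continuous_const) fun t => ne_of_gt (hD t)
  -- piece 1
  have h1 : (∫ t in Set.Ioc (0 : ℝ) a, f t) ≤ Real.pi / (2 * K) := by
    have step1 : (∫ t in Set.Ioc (0 : ℝ) a, f t)
        ≤ ∫ t in Set.Ioc (0 : ℝ) a, y / ((t ^ 2 + y ^ 2) * K) := by
      apply setIntegral_mono_on (hfint.mono_set (Set.Ioc_subset_Ioc_right hac))
        (hcont1.integrableOn_Ioc) measurableSet_Ioc
      intro t ht
      exact div_le_div_of_nonneg_left hy0.le (by positivity)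
        (mul_le_mul_of_nonneg_left (hlogK t ht) (hD t).le)
    have step2 : (∫ t in Set.Ioc (0 : ℝ) a, y / ((t ^ 2 + y ^ 2) * K))
        = arctan (a / y) / K := by
      simp_rw [← div_div]
      rw [integral_div, ← intervalIntegral.integral_of_le ha0.le, arctan_int y hy0,
        zero_div, Real.arctan_zero, sub_zero]
    have step3 : arctan (a / y) / K ≤ (Real.pi / 2) / K := by
      apply div_le_div_of_nonneg_right (le_of_lt (Real.arctan_lt_pi_div_two _)) hK0.le
    calc (∫ t in Set.Ioc (0 : ℝ) a, f t) ≤ arctan (a / y) / K := step1.trans_eq step2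
      _ ≤ (Real.pi / 2) / K := step3
      _ = Real.pi / (2 * K) := by rw [div_div]
  -- piece 2
  have hay : a / y = c / Real.sqrt y := by
    rw [hadef]
    rw [div_eq_div_iff (ne_of_gt hy0) (ne_of_gt hsy)]
    rw [mul_comm (Real.sqrt y) c, mul_assoc, Real.mul_self_sqrt hy0.le]
  have h2 : (∫ t in Set.Ioc a c, f t) ≤ ∫ u in Set.Ioi (c / Real.sqrt y), 1 / (u ^ 2 + 1) := by
    have step1 : (∫ t in Set.Ioc a c, f t) ≤ ∫ t in Set.Ioc a c, y / (t ^ 2 + y ^ 2) := by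
      apply setIntegral_mono_on (hfint.mono_set (Set.Ioc_subset_Ioc_left ha0.le))
        (hcont2.integrableOn_Ioc) measurableSet_Ioc
      intro t ht
      have ht' : t ∈ Set.Ioc (0 : ℝ) c := ⟨lt_trans ha0 ht.1, ht.2⟩
      have := hlog1 t ht'
      calc f t ≤ y / ((t ^ 2 + y ^ 2) * 1) :=
            div_le_div_of_nonneg_left hy0.le (by nlinarith [hD t])
              (mul_le_mul_of_nonneg_left this (hD t).le)
        _ = y / (t ^ 2 + y ^ 2) := by rw [mul_one]
    have step2 : (∫ t in Set.Ioc a c, y / (t ^ 2 + y ^ 2))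
        = arctan (c / y) - arctan (c / Real.sqrt y) := by
      rw [← intervalIntegral.integral_of_le hac, arctan_int y hy0, hay]
    have step3 : (∫ u in Set.Ioi (c / Real.sqrt y), 1 / (u ^ 2 + 1))
        = Real.pi / 2 - arctan (c / Real.sqrt y) := by
      have hfun : (fun u : ℝ => 1 / (u ^ 2 + 1)) = fun u : ℝ => (1 + u ^ 2)⁻¹ := by
        funext u; rw [one_div, add_comm]
      rw [hfun]
      exact integral_Ioi_inv_one_add_sq
    rw [step3]
    refine step1.trans ?_
    rw [step2]
    have := Real.arctan_lt_pi_div_two (c / y)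
    linarith
  calc (∫ t in Set.Ioc (0 : ℝ) c, f t)
      = (∫ t in Set.Ioc (0 : ℝ) a, f t) + ∫ t in Set.Ioc a c, f t := hsplit
    _ ≤ Real.pi / (2 * K) + ∫ u in Set.Ioi (c / Real.sqrt y), 1 / (u ^ 2 + 1) :=
        add_le_add h1 h2

theorem integral_bound_and_limit :
    (∀ y ∈ Set.Ioo (0 : ℝ) 1,
      (∫ t in Set.Ioc (0 : ℝ) (Real.exp 1)⁻¹,
          y / ((t ^ 2 + y ^ 2) * Real.log (1 / t)))
        ≤ Real.pi / (2 * (1 + (1 / 2) * Real.log (1 / y)))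
          + ∫ u in Set.Ioi ((Real.exp 1)⁻¹ / Real.sqrt y), 1 / (u ^ 2 + 1)) ∧
    Tendsto (fun y : ℝ =>
        ∫ t in Set.Ioc (0 : ℝ) (Real.exp 1)⁻¹,
          y / ((t ^ 2 + y ^ 2) * Real.log (1 / t)))
      (nhdsWithin 0 (Set.Ioi 0)) (nhds 0) := by
  constructor
  · exact key_bound
  · set c : ℝ := (Real.exp 1)⁻¹ with hcdef
    have hc0 : 0 < c := by positivity
    set I : ℝ → ℝ := fun y =>
      ∫ t in Set.Ioc (0 : ℝ) c, y / ((t ^ 2 + y ^ 2) * Real.log (1 / t)) with hIdef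
    set g : ℝ → ℝ := fun y =>
      Real.pi / (2 * (1 + (1 / 2) * Real.log (1 / y)))
        + (Real.pi / 2 - arctan (c / Real.sqrt y)) with hgdef
    have hmem : Set.Ioo (0 : ℝ) 1 ∈ 𝓝[>] (0 : ℝ) :=
      Ioo_mem_nhdsGT_of_mem (by norm_num : (0 : ℝ) ∈ Set.Ico (0 : ℝ) 1)
    -- g tends to 0
    have hg0 : Tendsto g (𝓝[>] (0 : ℝ)) (𝓝 0) := by
      have hlog : Tendsto (fun y : ℝ => Real.log (1 / y)) (𝓝[>] (0 : ℝ)) atTop := by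
        simp_rw [one_div]
        exact Real.tendsto_log_atTop.comp tendsto_inv_nhdsGT_zero
      have hden : Tendsto (fun y : ℝ => 2 * (1 + (1 / 2) * Real.log (1 / y)))
          (𝓝[>] (0 : ℝ)) atTop := by
        apply Tendsto.const_mul_atTop (by norm_num : (0:ℝ) < 2)
        apply tendsto_atTop_add_const_left
        exact Tendsto.const_mul_atTop (by norm_num : (0:ℝ) < 1/2) hlog
      have h1 : Tendsto (fun y : ℝ => Real.pi / (2 * (1 + (1 / 2) * Real.log (1 / y))))
          (𝓝[>] (0 : ℝ)) (𝓝 0) :=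
        Tendsto.div_atTop tendsto_const_nhds hden
      have hsqrt : Tendsto Real.sqrt (𝓝[>] (0 : ℝ)) (𝓝[>] (0 : ℝ)) := by
        rw [tendsto_nhdsWithin_iff]
        constructor
        · have : Tendsto Real.sqrt (𝓝 0) (𝓝 0) := by
            simpa using Real.continuous_sqrt.tendsto 0
          exact this.mono_left nhdsWithin_le_nhds
        · filter_upwards [self_mem_nhdsWithin] with y hy
          exact Real.sqrt_pos.2 hy
      have hinvsqrt : Tendsto (fun y : ℝ => c / Real.sqrt y) (𝓝[>] (0 : ℝ)) atTop := by
        simp_rw [div_eq_mul_inv]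
        exact Tendsto.const_mul_atTop hc0 (tendsto_inv_nhdsGT_zero.comp hsqrt)
      have harctan : Tendsto (fun y : ℝ => arctan (c / Real.sqrt y)) (𝓝[>] (0 : ℝ))
          (𝓝 (Real.pi / 2)) :=
        (tendsto_nhds_of_tendsto_nhdsWithin Real.tendsto_arctan_atTop).comp hinvsqrt
      have h2 : Tendsto (fun y : ℝ => Real.pi / 2 - arctan (c / Real.sqrt y))
          (𝓝[>] (0 : ℝ)) (𝓝 0) := by
        have := (tendsto_const_nhds (x := Real.pi / 2)
          (f := 𝓝[>] (0:ℝ))).sub harctan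
        simpa using this
      have h3 := h1.add h2
      rw [add_zero] at h3
      exact h3
    -- squeeze
    apply tendsto_of_tendsto_of_tendsto_of_le_of_le' tendsto_const_nhds hg0
    · filter_upwards [self_mem_nhdsWithin] with y hy
      apply setIntegral_nonneg measurableSet_Ioc
      intro t ht
      have h1 : Real.exp 1 ≤ 1 / t := by
        rw [le_div_iff₀ ht.1]
        calc Real.exp 1 * t ≤ Real.exp 1 * c := by nlinarith [ht.2, Real.exp_pos 1]
          _ = 1 := mul_inv_cancel₀ (ne_of_gt (Real.exp_pos 1))
      have hL : (0 : ℝ) < Real.log (1 / t) := by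
        calc (0 : ℝ) < 1 := one_pos
          _ = Real.log (Real.exp 1) := (Real.log_exp 1).symm
          _ ≤ Real.log (1 / t) := Real.log_le_log (Real.exp_pos 1) h1
      have hDt : (0 : ℝ) < t ^ 2 + y ^ 2 := by
        have := sq_nonneg t; have := pow_pos (show (0:ℝ) < y from hy) 2; linarith
      exact div_nonneg (le_of_lt hy) (mul_nonneg hDt.le hL.le)
    · filter_upwards [hmem] with y hy
      have hb := key_bound y hy
      have htail : (∫ u in Set.Ioi (c / Real.sqrt y), 1 / (u ^ 2 + 1))
          = Real.pi / 2 - arctan (c / Real.sqrt y) := by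
        have hfun : (fun u : ℝ => 1 / (u ^ 2 + 1)) = fun u : ℝ => (1 + u ^ 2)⁻¹ := by
          funext u; rw [one_div, add_comm]
        rw [hfun]
        exact integral_Ioi_inv_one_add_sq
      rw [htail] at hb
      exact hb
end
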